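/- Let G be a totally disconnected, locally compact, second countable topological group and let U and V be compact open subgroups of G. Suppose F_U is a closed normal pro-nilpotent subgroup of U that contains every closed normal pro-nilpotent subgroup of U, and F_V is a closed normal pro-nilpotent subgroup of V that contains every closed normal pro-nilpotent subgroup of V. Then F_U and F_V are commensurate. In particular (taking V = gUg⁻¹), for every g ∈ G the subgroups gF_Ug⁻¹ and F_U are commensurate, i.e., F_U is commensurated by G. -/

import Mathlib

/-- A topological group `U` is pro-nilpotent if for every open normal subgroup `N`,
the quotient `U ⧸ N` is nilpotent. -/
def IsProNilpotent (U : Type*) [Group U] [TopologicalSpace U] : Prop :=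
  ∀ (N : Subgroup U) (hN : N.Normal), IsOpen (N : Set U) →
    letI := hN
    Group.IsNilpotent (U ⧸ N)

open Subgroup Pointwise




lemma coe_sup_of_le_normalizer {G : Type*} [Group G] {A B : Subgroup G}
    (h : A ≤ Subgroup.normalizer (B : Set G)) : ((A ⊔ B : Subgroup G) : Set G) = (A : Set G) * (B : Set G) := by
  have hconj : ∀ a ∈ A, ∀ b ∈ B, a⁻¹ * b * a ∈ B := by
    intro a ha b hb
    have := (Subgroup.mem_normalizer_iff.mp (h (inv_mem ha))) b
    simpa using this.mp hb
  have hconj' : ∀ a ∈ A, ∀ b ∈ B, a * b * a⁻¹ ∈ B := by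
    intro a ha b hb
    have := (Subgroup.mem_normalizer_iff.mp (h ha)) b
    exact this.mp hb
  refine Set.Subset.antisymm ?_ ?_
  · -- A ⊔ B ⊆ A * B : A*B is a subgroup
    let S : Subgroup G :=
      { carrier := (↑A : Set G) * ↑B
        one_mem' := ⟨1, one_mem A, 1, one_mem B, mul_one 1⟩
        mul_mem' := by
          rintro x y ⟨a1, ha1, b1, hb1, rfl⟩ ⟨a2, ha2, b2, hb2, rfl⟩
          refine ⟨a1 * a2, mul_mem ha1 ha2, (a2⁻¹ * b1 * a2) * b2,
            mul_mem (hconj a2 ha2 b1 hb1) hb2, ?_⟩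
          group
        inv_mem' := by
          rintro x ⟨a, ha, b, hb, rfl⟩
          refine ⟨a⁻¹, inv_mem ha, a * b⁻¹ * a⁻¹, hconj' a ha b⁻¹ (inv_mem hb), ?_⟩
          group }
    have hAS : A ≤ S := fun a ha => ⟨a, ha, 1, one_mem B, mul_one a⟩
    have hBS : B ≤ S := fun b hb => ⟨1, one_mem A, b, hb, one_mul b⟩
    exact fun x hx => (sup_le hAS hBS) hx
  · rintro x ⟨a, ha, b, hb, rfl⟩
    exact mul_mem (le_sup_left (a := A) (b := B) ha) (le_sup_right (a := A) (b := B) hb)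

lemma isCompact_coe_sup {G : Type*} [Group G] [TopologicalSpace G] [IsTopologicalGroup G]
    {A B : Subgroup G} (h : A ≤ Subgroup.normalizer (B : Set G))
    (hA : IsCompact (A : Set G)) (hB : IsCompact (B : Set G)) :
    IsCompact ((A ⊔ B : Subgroup G) : Set G) := by
  rw [coe_sup_of_le_normalizer h]
  exact hA.mul hB

lemma IsProNilpotent.of_mulEquiv {A B : Type*} [Group A] [TopologicalSpace A]
    [Group B] [TopologicalSpace B] (e : A ≃* B) (he : Continuous e)
    (h : IsProNilpotent A) : IsProNilpotent B := by
  intro N hN hNopen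
  haveI := hN
  set N1 : Subgroup A := N.comap e.toMonoidHom with hN1
  have hN1n : N1.Normal := hN.comap e.toMonoidHom
  have hN1open : IsOpen (N1 : Set A) := hNopen.preimage he
  have hnil := h N1 hN1n hN1open
  haveI := hN1n
  have hmap : Subgroup.map e.toMonoidHom N1 = N :=
    Subgroup.map_comap_eq_self_of_surjective e.surjective N
  exact nilpotent_of_mulEquiv (QuotientGroup.congr N1 N e hmap)

lemma isProNilpotent_of_closed_le {G : Type*} [Group G] [TopologicalSpace G]
    [IsTopologicalGroup G] [TotallyDisconnectedSpace G] {F K : Subgroup G}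
    (hFc : IsCompact (F : Set G)) (hF : IsProNilpotent ↥F) (hKF : K ≤ F)
    (hKcl : IsClosed (K : Set G)) : IsProNilpotent ↥K := by
  intro M hM hMopen
  haveI := hM
  haveI : CompactSpace ↥F := isCompact_iff_compactSpace.mp hFc
  set ι : ↥K →* ↥F := Subgroup.inclusion hKF with hι
  have hιc : Continuous ι := Continuous.subtype_mk continuous_subtype_val _
  -- find an open set S in G cutting out M
  obtain ⟨S, hSopen, hSM⟩ := isOpen_induced_iff.mp hMopen
  have h1S : (1 : G) ∈ S := by
    have : (1 : ↥K) ∈ Subtype.val ⁻¹' S := by rw [hSM]; exact one_mem M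
    simpa using this
  -- pass to F
  set S' : Set ↥F := ((↑) : ↥F → G) ⁻¹' S with hS'
  have hS'open : IsOpen S' := hSopen.preimage continuous_subtype_val
  have h1S' : (1 : ↥F) ∈ S' := by simpa [hS'] using h1S
  obtain ⟨C, ⟨h1C, hCclopen⟩, hCS⟩ :=
    (nhds_basis_clopen (1 : ↥F)).mem_iff.mp (hS'open.mem_nhds h1S')
  obtain ⟨H, hHC⟩ :=
    IsTopologicalGroup.exist_openNormalSubgroup_sub_clopen_nhds_of_one hCclopen h1C
  -- pull back H to K
  set H' : Subgroup ↥K := H.toSubgroup.comap ι with hH'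
  have hH'M : H' ≤ M := by
    intro x hx
    have hxC : ι x ∈ C := hHC hx
    have hxS : x ∈ Subtype.val ⁻¹' S := hCS hxC
    rw [hSM] at hxS
    exact hxS
  have hH'n : H'.Normal := (H.isNormal').comap ι
  haveI := hH'n
  set φ : ↥K →* (↥F ⧸ H.toSubgroup) := (QuotientGroup.mk' H.toSubgroup).comp ι with hφ
  have hker : φ.ker = H' := by
    ext x
    simp only [hφ, MonoidHom.mem_ker, MonoidHom.comp_apply, hH', Subgroup.mem_comap]
    rw [QuotientGroup.mk'_apply, QuotientGroup.eq_one_iff]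
  have hnil1 : Group.IsNilpotent (↥F ⧸ H.toSubgroup) :=
    hF H.toSubgroup H.isNormal' H.toOpenSubgroup.isOpen
  haveI := hnil1
  have hnil2 : Group.IsNilpotent ↥φ.range := inferInstance
  haveI := hnil2
  have hnil3 : Group.IsNilpotent (↥K ⧸ H') := by
    have e1 : (↥K ⧸ φ.ker) ≃* ↥φ.range := QuotientGroup.quotientKerEquivRange φ
    have e2 : (↥K ⧸ φ.ker) ≃* (↥K ⧸ H') := QuotientGroup.quotientMulEquivOfEq hker
    exact nilpotent_of_mulEquiv (e1.symm.trans e2)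
  haveI := hnil3
  refine nilpotent_of_surjective (QuotientGroup.map H' M (MonoidHom.id _) (by simpa using hH'M)) ?_
  intro q
  obtain ⟨x, rfl⟩ := QuotientGroup.mk'_surjective M q
  exact ⟨QuotientGroup.mk x, by simp [QuotientGroup.map_mk]⟩



lemma card_sup_dvd {G : Type*} [Group G] (A B : Subgroup G) [B.Normal] :
    Nat.card ↥(A ⊔ B) ∣ Nat.card A * Nat.card B := by
  have h1 : Nat.card ↥(A ⊔ B) =
      Nat.card (↥(A ⊔ B) ⧸ B.subgroupOf (A ⊔ B)) * Nat.card ↥(B.subgroupOf (A ⊔ B)) :=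
    Subgroup.card_eq_card_quotient_mul_card_subgroup _
  have h2 : Nat.card (↥(A ⊔ B) ⧸ B.subgroupOf (A ⊔ B)) = Nat.card (↥A ⧸ B.subgroupOf A) :=
    Nat.card_congr (QuotientGroup.quotientInfEquivProdNormalQuotient A B).symm.toEquiv
  have h3 : Nat.card ↥(B.subgroupOf (A ⊔ B)) = Nat.card B :=
    Nat.card_congr (Subgroup.subgroupOfEquivOfLe le_sup_right).toEquiv
  have h4 : Nat.card (↥A ⧸ B.subgroupOf A) ∣ Nat.card ↥A :=
    (B.subgroupOf A).index_dvd_card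
  rw [h1, h2, h3]
  exact Nat.mul_dvd_mul h4 dvd_rfl

lemma sylow_normal_of_nilpotent {G : Type*} [Group G] [Finite G]
    (h : Group.IsNilpotent G) (p : ℕ) (hp : Fact p.Prime) (P : Sylow p G) :
    (↑P : Subgroup G).Normal := by
  have h' : Group.IsNilpotent G ↔ ∀ (p : ℕ), Fact (Nat.Prime p) → ∀ (P : Sylow p G),
      (↑P : Subgroup G).Normal := (isNilpotent_of_finite_tfae (G := G)).out 0 3
  exact h'.mp h p hp P

/-- Fitting's theorem for finite groups (top version). -/
lemma fitting_top {G : Type*} [Group G] [Finite G] {H K : Subgroup G}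
    (hHn : H.Normal) (hKn : K.Normal)
    (hH : Group.IsNilpotent ↥H) (hK : Group.IsNilpotent ↥K) (hsup : H ⊔ K = ⊤) :
    Group.IsNilpotent G := by
  haveI := hHn; haveI := hKn
  have h' : Group.IsNilpotent G ↔ ∀ (p : ℕ), Fact (Nat.Prime p) → ∀ (P : Sylow p G),
      (↑P : Subgroup G).Normal := (isNilpotent_of_finite_tfae (G := G)).out 0 3
  rw [h']
  intro p hp P
  haveI := hp
  -- normal Sylow subgroups of H and K, pushed to G
  obtain ⟨PH⟩ : Nonempty (Sylow p ↥H) := Sylow.nonempty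
  obtain ⟨PK⟩ : Nonempty (Sylow p ↥K) := Sylow.nonempty
  have hPHn : (↑PH : Subgroup ↥H).Normal := sylow_normal_of_nilpotent hH p hp PH
  have hPKn : (↑PK : Subgroup ↥K).Normal := sylow_normal_of_nilpotent hK p hp PK
  haveI : (↑PH : Subgroup ↥H).Characteristic := Sylow.characteristic_of_normal PH hPHn
  haveI : (↑PK : Subgroup ↥K).Characteristic := Sylow.characteristic_of_normal PK hPKn
  set A : Subgroup G := (↑PH : Subgroup ↥H).map H.subtype with hA
  set B : Subgroup G := (↑PK : Subgroup ↥K).map K.subtype with hB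
  haveI hAn : A.Normal := ConjAct.normal_of_characteristic_of_normal
  haveI hBn : B.Normal := ConjAct.normal_of_characteristic_of_normal
  set Q : Subgroup G := A ⊔ B with hQ
  haveI hQn : Q.Normal := Subgroup.sup_normal A B
  have hQp : IsPGroup p ↥Q := IsPGroup.to_sup_of_normal_right
    (PH.isPGroup'.map H.subtype) (PK.isPGroup'.map K.subtype)
  -- p does not divide the cardinality of G ⧸ Q
  set π := QuotientGroup.mk' Q with hπ
  have hπs : Function.Surjective π := QuotientGroup.mk'_surjective Q
  have key : ∀ (L : Subgroup G) (PL : Sylow p ↥L),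
      (↑PL : Subgroup ↥L).map L.subtype ≤ Q → ¬ p ∣ Nat.card ↥(L.map π) := by
    intro L PL hle hdvd
    set φ : ↥L →* G ⧸ Q := π.comp L.subtype with hφ
    have hrange : L.map π = φ.range := by
      ext x
      constructor
      · rintro ⟨y, hy, rfl⟩; exact ⟨⟨y, hy⟩, rfl⟩
      · rintro ⟨⟨y, hy⟩, rfl⟩; exact ⟨y, hy, rfl⟩
    have hker : (↑PL : Subgroup ↥L) ≤ φ.ker := by
      intro x hx
      have hxQ : (x : G) ∈ Q := hle ⟨x, hx, rfl⟩
      have : φ x = 1 ↔ (x : G) ∈ Q := QuotientGroup.eq_one_iff _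
      exact MonoidHom.mem_ker.mpr (this.mpr hxQ)
    have hcard : Nat.card ↥(L.map π) = φ.ker.index := by
      rw [hrange]
      exact (Nat.card_congr (QuotientGroup.quotientKerEquivRange φ).toEquiv).symm
    have hidx : φ.ker.index ∣ (↑PL : Subgroup ↥L).index := Subgroup.index_dvd_of_le hker
    exact PL.not_dvd_index (dvd_trans (hcard ▸ hdvd) hidx)
  have hAQ : (↑PH : Subgroup ↥H).map H.subtype ≤ Q := le_sup_left
  have hBQ : (↑PK : Subgroup ↥K).map K.subtype ≤ Q := le_sup_right
  have hH' := key H PH hAQ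
  have hK' := key K PK hBQ
  have htop : (H.map π) ⊔ (K.map π) = ⊤ := by
    rw [← Subgroup.map_sup, hsup, Subgroup.map_top_of_surjective _ hπs]
  haveI : (K.map π).Normal := hKn.map π hπs
  have hcardtop : Nat.card (G ⧸ Q) = Nat.card ↥((H.map π) ⊔ (K.map π)) := by
    rw [htop]
    exact (Nat.card_congr Subgroup.topEquiv.toEquiv).symm
  have hnd : ¬ p ∣ Nat.card (G ⧸ Q) := by
    intro hdvd
    rw [hcardtop] at hdvd
    have := hdvd.trans (card_sup_dvd (H.map π) (K.map π))
    rcases (Nat.Prime.dvd_mul hp.out).mp this with h | h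
    · exact hH' h
    · exact hK' h
  -- the image of P in G ⧸ Q is trivial
  have hPQ : (↑P : Subgroup G) ≤ Q := by
    rw [← QuotientGroup.ker_mk' Q, ← Subgroup.map_eq_bot_iff]
    have hpg : IsPGroup p ↥((↑P : Subgroup G).map π) := P.isPGroup'.map π
    obtain ⟨n, hn⟩ := (IsPGroup.iff_card).mp hpg
    rcases Nat.eq_zero_or_pos n with rfl | hnpos
    · rw [pow_zero] at hn
      exact Subgroup.card_eq_one.mp hn
    · exfalso
      apply hnd
      calc p ∣ p ^ n := dvd_pow_self p hnpos.ne'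
        _ = Nat.card ↥((↑P : Subgroup G).map π) := hn.symm
        _ ∣ Nat.card (G ⧸ Q) := Subgroup.card_subgroup_dvd_card _
  have : Q = ↑P := P.3 hQp hPQ
  rw [← this]
  exact hQn

/-- Fitting's theorem, join version. -/
lemma fitting_sup {G : Type*} [Group G] [Finite G] {H K : Subgroup G}
    (hHn : H.Normal) (hKn : K.Normal)
    (hH : Group.IsNilpotent ↥H) (hK : Group.IsNilpotent ↥K) :
    Group.IsNilpotent ↥(H ⊔ K) := by
  have hHL : H ≤ H ⊔ K := le_sup_left
  have hKL : K ≤ H ⊔ K := le_sup_right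
  refine fitting_top (H := H.subgroupOf (H ⊔ K)) (K := K.subgroupOf (H ⊔ K))
    (hHn.subgroupOf _) (hKn.subgroupOf _) ?_ ?_ ?_
  · exact nilpotent_of_mulEquiv (Subgroup.subgroupOfEquivOfLe hHL).symm
  · exact nilpotent_of_mulEquiv (Subgroup.subgroupOfEquivOfLe hKL).symm
  · rw [← Subgroup.subgroupOf_sup hHL hKL]
    exact Subgroup.subgroupOf_self _

/-- Fitting's theorem, finite join version. -/
lemma fitting_finset {Q : Type*} [Group Q] [Finite Q] {ι : Type*} (s : Finset ι)
    (f : ι → Subgroup Q) (hn : ∀ i ∈ s, (f i).Normal)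
    (hnil : ∀ i ∈ s, Group.IsNilpotent ↥(f i)) :
    (⨆ i ∈ s, f i).Normal ∧ Group.IsNilpotent ↥(⨆ i ∈ s, f i) := by
  classical
  induction s using Finset.induction_on with
  | empty =>
      simp only [Finset.notMem_empty, iSup_false, iSup_bot]
      refine ⟨?_, ?_⟩
      · simpa using (inferInstance : (⊥ : Subgroup Q).Normal)
      · have : Subsingleton ↥(⨆ i ∈ (∅ : Finset ι), f i) := by
          simp only [Finset.notMem_empty, iSup_false, iSup_bot]
          infer_instance
        infer_instance
  | @insert a s ha ih =>
      have h1 : (⨆ i ∈ insert a s, f i) = f a ⊔ ⨆ i ∈ s, f i := by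
        exact Finset.iSup_insert a s f
      obtain ⟨ihn, ihnil⟩ := ih (fun i hi => hn i (Finset.mem_insert_of_mem hi))
        (fun i hi => hnil i (Finset.mem_insert_of_mem hi))
      have han : (f a).Normal := hn a (Finset.mem_insert_self a s)
      rw [h1]
      haveI := han; haveI := ihn
      exact ⟨Subgroup.sup_normal _ _,
        fitting_sup han ihn (hnil a (Finset.mem_insert_self a s)) ihnil⟩

lemma fitting_finset_top {Q : Type*} [Group Q] [Finite Q] {ι : Type*} (s : Finset ι)
    (f : ι → Subgroup Q) (hn : ∀ i ∈ s, (f i).Normal)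
    (hnil : ∀ i ∈ s, Group.IsNilpotent ↥(f i)) (htop : (⨆ i ∈ s, f i) = ⊤) :
    Group.IsNilpotent Q := by
  have h := (fitting_finset s f hn hnil).2
  rw [htop] at h
  exact nilpotent_of_mulEquiv Subgroup.topEquiv

section Conj
variable {G : Type*} [Group G]

lemma conj_mem_map {t x : G} {K : Subgroup G} :
    x ∈ K.map (MulAut.conj t).toMonoidHom ↔ t⁻¹ * x * t ∈ K := by
  constructor
  · rintro ⟨k, hk, rfl⟩
    simpa [MulAut.conj_apply, mul_assoc] using hk
  · intro h
    exact ⟨t⁻¹ * x * t, h, by simp [MulAut.conj_apply]; group⟩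

lemma conj_map_map (K : Subgroup G) (a b : G) :
    (K.map (MulAut.conj a).toMonoidHom).map (MulAut.conj b).toMonoidHom
      = K.map (MulAut.conj (b * a)).toMonoidHom := by
  rw [Subgroup.map_map]
  congr 1
  ext x
  simp [MulAut.conj_apply, mul_assoc]

lemma conj_map_one (K : Subgroup G) : K.map (MulAut.conj (1 : G)).toMonoidHom = K := by
  ext x
  simp [conj_mem_map]

variable [TopologicalSpace G] [IsTopologicalGroup G]

lemma continuous_conj (t : G) : Continuous (fun x : G => t * x * t⁻¹) :=
  (continuous_mul_right t⁻¹).comp (continuous_mul_left t)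

def homeomorph_conj (t : G) : G ≃ₜ G :=
  (Homeomorph.mulLeft t).trans (Homeomorph.mulRight t⁻¹)

def homeomorph_conj_apply (t x : G) : (homeomorph_conj t) x = t * x * t⁻¹ := rfl

lemma coe_conj_map (K : Subgroup G) (t : G) :
    ((K.map (MulAut.conj t).toMonoidHom : Subgroup G) : Set G)
      = (fun x : G => t * x * t⁻¹) '' (K : Set G) := by
  ext x
  simp [Subgroup.mem_map, Set.mem_image, MulAut.conj_apply]

lemma isCompact_conj_map {K : Subgroup G} (hK : IsCompact (K : Set G)) (t : G) :
    IsCompact ((K.map (MulAut.conj t).toMonoidHom : Subgroup G) : Set G) := by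
  rw [coe_conj_map]
  exact hK.image (continuous_conj t)

lemma isProNilpotent_conj_map {K : Subgroup G} (hK : IsProNilpotent ↥K) (t : G) :
    IsProNilpotent ↥(K.map (MulAut.conj t).toMonoidHom) := by
  have hinj : Function.Injective (MulAut.conj t).toMonoidHom := (MulAut.conj t).injective
  refine IsProNilpotent.of_mulEquiv (Subgroup.equivMapOfInjective K _ hinj) ?_ hK
  exact continuous_induced_rng.mpr ((continuous_conj t).comp continuous_subtype_val)

end Conj

lemma fitting_relindex_ne_zero
    {G : Type*} [Group G] [TopologicalSpace G] [IsTopologicalGroup G] [TotallyDisconnectedSpace G]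
    (U V : Subgroup G)
    (hUc : IsCompact (U : Set G)) (hUo : IsOpen (U : Set G))
    (hVc : IsCompact (V : Set G)) (hVo : IsOpen (V : Set G))
    (FU FV : Subgroup G)
    (hFUle : FU ≤ U) (hFUclosed : IsClosed (FU : Set G))
    (hFUnormal : (FU.subgroupOf U).Normal) (hFUnil : IsProNilpotent ↥FU)
    (hFVmax : ∀ K : Subgroup G, K ≤ V → IsClosed (K : Set G) → (K.subgroupOf V).Normal →
      IsProNilpotent ↥K → K ≤ FV) :
    FV.relIndex FU ≠ 0 := by
  classical
  haveI : CompactSpace ↥V := isCompact_iff_compactSpace.mp hVc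
  have hUcl : IsClosed (U : Set G) := hUc.isClosed
  have hVcl : IsClosed (V : Set G) := hVc.isClosed
  set W : Subgroup G := U ⊓ V with hW
  have hWU : W ≤ U := inf_le_left
  have hWV : W ≤ V := inf_le_right
  have hWo : IsOpen (W : Set G) := by rw [hW, Subgroup.coe_inf]; exact hUo.inter hVo
  have hWcl : IsClosed (W : Set G) := by rw [hW, Subgroup.coe_inf]; exact hUcl.inter hVcl
  -- the normal core `N` of `W` in `V`
  set N : Subgroup G := (⨅ (v : ↥V), W.comap (MulAut.conj (v : G)).toMonoidHom) ⊓ V with hN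
  have hmemN : ∀ g : G, g ∈ N ↔ (g ∈ V ∧ ∀ v ∈ V, v * g * v⁻¹ ∈ W) := by
    intro g
    rw [hN]
    simp only [Subgroup.mem_inf, Subgroup.mem_iInf, Subgroup.mem_comap,
      MulEquiv.coe_toMonoidHom, MulAut.conj_apply]
    constructor
    · rintro ⟨h1, h2⟩
      exact ⟨h2, fun v hv => h1 ⟨v, hv⟩⟩
    · rintro ⟨h1, h2⟩
      exact ⟨fun v => h2 v v.2, h1⟩
  have hNV : N ≤ V := inf_le_right
  have hNW : N ≤ W := fun g hg => by
    have := ((hmemN g).mp hg).2 1 (one_mem V)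
    simpa using this
  have hNU : N ≤ U := hNW.trans hWU
  have hNconj : ∀ v ∈ V, ∀ g ∈ N, v * g * v⁻¹ ∈ N := by
    intro v hv g hg
    rw [hmemN] at hg ⊢
    obtain ⟨hgV, hgW⟩ := hg
    refine ⟨mul_mem (mul_mem hv hgV) (inv_mem hv), ?_⟩
    intro u hu
    have h := hgW (u * v) (mul_mem hu hv)
    have heq : u * (v * g * v⁻¹) * u⁻¹ = (u * v) * g * (u * v)⁻¹ := by group
    rw [heq]
    exact h
  have hNcl : IsClosed (N : Set G) := by
    rw [hN, Subgroup.coe_inf]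
    refine IsClosed.inter ?_ hVcl
    rw [Subgroup.coe_iInf]
    refine isClosed_iInter fun v => ?_
    rw [Subgroup.coe_comap]
    have hc : Continuous ⇑(MulAut.conj ((v : G))).toMonoidHom := continuous_conj (v : G)
    exact IsClosed.preimage hc hWcl
  -- `N` has finite index in `V`, hence is open in `G`
  haveI hWVfin : Finite (↥V ⧸ W.subgroupOf V) := by
    apply Subgroup.quotient_finite_of_isOpen
    exact hWo.preimage continuous_subtype_val
  haveI hWVfi : (W.subgroupOf V).FiniteIndex := Subgroup.finiteIndex_of_finite_quotient
  have hcoreN : (W.subgroupOf V).normalCore ≤ N.subgroupOf V := by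
    intro x hx
    rw [Subgroup.mem_subgroupOf, hmemN]
    refine ⟨x.2, ?_⟩
    intro v hv
    have h := hx ⟨v, hv⟩
    rw [Subgroup.mem_subgroupOf] at h
    exact h
  haveI hNVfi : (N.subgroupOf V).FiniteIndex :=
    Subgroup.finiteIndex_of_le hcoreN
  have hNVcl : IsClosed ((N.subgroupOf V : Subgroup ↥V) : Set ↥V) :=
    hNcl.preimage continuous_subtype_val
  have hNVopen : IsOpen ((N.subgroupOf V : Subgroup ↥V) : Set ↥V) :=
    Subgroup.isOpen_of_isClosed_of_finiteIndex _ hNVcl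
  have hNo : IsOpen (N : Set G) := by
    obtain ⟨O, hO, hOpre⟩ := isOpen_induced_iff.mp hNVopen
    have hset : (N : Set G) = O ∩ V := by
      ext g
      constructor
      · intro hg
        have hgV : g ∈ V := hNV hg
        have : (⟨g, hgV⟩ : ↥V) ∈ Subtype.val ⁻¹' O := by
          rw [hOpre]
          exact Subgroup.mem_subgroupOf.mpr hg
        exact ⟨this, hgV⟩
      · rintro ⟨hgO, hgV⟩
        have : (⟨g, hgV⟩ : ↥V) ∈ Subtype.val ⁻¹' O := hgO
        rw [hOpre] at this
        exact Subgroup.mem_subgroupOf.mp this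
    rw [hset]
    exact hO.inter hVo
  -- compactness facts
  have hFUc : IsCompact (FU : Set G) := hUc.of_isClosed_subset hFUclosed hFUle
  -- `K := FU ⊓ N`
  set K : Subgroup G := FU ⊓ N with hK
  have hKFU : K ≤ FU := inf_le_left
  have hKN : K ≤ N := inf_le_right
  have hKcl : IsClosed (K : Set G) := by
    rw [hK, Subgroup.coe_inf]; exact hFUclosed.inter hNcl
  have hKc : IsCompact (K : Set G) := hFUc.of_isClosed_subset hKcl hKFU
  have hKnil : IsProNilpotent ↥K := isProNilpotent_of_closed_le hFUc hFUnil inf_le_left hKcl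
  have hFUconj : ∀ h k : G, h ∈ FU → k ∈ U → k * h * k⁻¹ ∈ FU :=
    (Subgroup.normal_subgroupOf_iff hFUle).mp hFUnormal
  have hKconjN : ∀ n ∈ N, ∀ k ∈ K, n * k * n⁻¹ ∈ K := by
    intro n hn k hk
    rw [hK, Subgroup.mem_inf] at hk ⊢
    exact ⟨hFUconj k n hk.1 (hNU hn), hNconj n (hNV hn) k hk.2⟩
  -- conjugates of K
  set J : G → Subgroup G := fun t => K.map (MulAut.conj t).toMonoidHom with hJ
  have hJmem : ∀ t x : G, x ∈ J t ↔ t⁻¹ * x * t ∈ K := fun t x => conj_mem_map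
  have hJN_of_mem : ∀ n ∈ N, J n = K := by
    intro n hn
    ext x
    rw [hJmem]
    constructor
    · intro h
      have := hKconjN n hn _ h
      have heq : n * (n⁻¹ * x * n) * n⁻¹ = x := by group
      rwa [heq] at this
    · intro h
      have := hKconjN n⁻¹ (inv_mem hn) x h
      simpa using this
  have hJle : ∀ t ∈ V, J t ≤ N := by
    intro t ht x hx
    rw [hJmem] at hx
    have := hNconj t ht _ (hKN hx)
    have heq : t * (t⁻¹ * x * t) * t⁻¹ = x := by group
    rwa [heq] at this
  have hJconjN : ∀ t ∈ V, ∀ n ∈ N, ∀ x ∈ J t, n * x * n⁻¹ ∈ J t := by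
    intro t ht n hn x hx
    rw [hJmem] at hx ⊢
    have hm : t⁻¹ * n * t ∈ N := by
      have := hNconj t⁻¹ (inv_mem ht) n hn
      simpa using this
    have := hKconjN _ hm _ hx
    have heq : (t⁻¹ * n * t) * (t⁻¹ * x * t) * (t⁻¹ * n * t)⁻¹ = t⁻¹ * (n * x * n⁻¹) * t := by
      group
    rwa [heq] at this
  have hJc : ∀ t : G, IsCompact ((J t : Subgroup G) : Set G) := fun t => isCompact_conj_map hKc t
  have hJnil : ∀ t : G, IsProNilpotent ↥(J t) := fun t => isProNilpotent_conj_map hKnil t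
  -- coset representatives
  haveI : Finite (↥V ⧸ N.subgroupOf V) := by
    apply Subgroup.quotient_finite_of_isOpen
    exact hNVopen
  haveI := Fintype.ofFinite (↥V ⧸ N.subgroupOf V)
  set T : Finset G :=
    Finset.image (fun q : ↥V ⧸ N.subgroupOf V => ((Quotient.out q : ↥V) : G)) Finset.univ with hT
  have hTV : ∀ t ∈ T, t ∈ V := by
    intro t ht
    rw [hT, Finset.mem_image] at ht
    obtain ⟨q, _, rfl⟩ := ht
    exact (Quotient.out q).2
  have hTrep : ∀ v ∈ V, ∃ t ∈ T, t⁻¹ * v ∈ N := by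
    intro v hv
    set q : ↥V ⧸ N.subgroupOf V := QuotientGroup.mk ⟨v, hv⟩ with hq
    refine ⟨((Quotient.out q : ↥V) : G), ?_, ?_⟩
    · rw [hT, Finset.mem_image]
      exact ⟨q, Finset.mem_univ q, rfl⟩
    · have : QuotientGroup.mk (Quotient.out q) = (QuotientGroup.mk (⟨v, hv⟩ : ↥V) :
        ↥V ⧸ N.subgroupOf V) := by rw [hq]; exact Quotient.out_eq q
      have h2 := (QuotientGroup.eq (s := N.subgroupOf V)).mp this
      rw [Subgroup.mem_subgroupOf] at h2
      exact h2
  -- the join P of the conjugates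
  set P : Subgroup G := ⨆ t ∈ T, J t with hP
  have hJleP : ∀ t ∈ T, J t ≤ P := by
    intro t ht
    rw [hP]
    exact le_iSup₂_of_le t ht le_rfl
  -- induction: compactness, `≤ N`, conjugation stability
  have main : ∀ s : Finset G, (∀ t ∈ s, t ∈ V) →
      IsCompact ((⨆ t ∈ s, J t : Subgroup G) : Set G) ∧ (⨆ t ∈ s, J t) ≤ N ∧
      (∀ n ∈ N, ∀ x ∈ (⨆ t ∈ s, J t), n * x * n⁻¹ ∈ (⨆ t ∈ s, J t)) := by
    intro s
    induction s using Finset.induction_on with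
    | empty =>
        intro _
        simp only [Finset.notMem_empty, iSup_false, iSup_bot]
        refine ⟨?_, bot_le, ?_⟩
        · rw [Subgroup.coe_bot]
          exact isCompact_singleton
        · intro n _ x hx
          rw [Subgroup.mem_bot] at hx
          subst hx
          simpa using Subgroup.one_mem _
    | @insert a s ha ih =>
        intro hs
        have haV : a ∈ V := hs a (Finset.mem_insert_self a s)
        obtain ⟨ihc, ihle, ihconj⟩ := ih (fun t ht => hs t (Finset.mem_insert_of_mem ht))
        have h1 : (⨆ t ∈ insert a s, J t) = J a ⊔ ⨆ t ∈ s, J t := Finset.iSup_insert a s J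
        have hnorm : J a ≤ Subgroup.normalizer ((⨆ t ∈ s, J t : Subgroup G) : Set G) := by
          intro g hg
          have hgN : g ∈ N := hJle a haV hg
          rw [Subgroup.mem_normalizer_iff]
          intro h
          constructor
          · intro hh
            exact ihconj g hgN h hh
          · intro hh
            have := ihconj g⁻¹ (inv_mem hgN) _ hh
            have heq : g⁻¹ * (g * h * g⁻¹) * g⁻¹⁻¹ = h := by group
            rwa [heq] at this
        refine ⟨?_, ?_, ?_⟩
        · rw [h1]
          exact isCompact_coe_sup hnorm (hJc a) ihc
        · rw [h1]
          exact sup_le (hJle a haV) ihle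
        · rw [h1]
          intro n hn x hx
          have hset := coe_sup_of_le_normalizer hnorm
          have hx' : x ∈ ((J a ⊔ ⨆ t ∈ s, J t : Subgroup G) : Set G) := hx
          rw [hset] at hx'
          obtain ⟨y, hy, z, hz, rfl⟩ := hx'
          have h2 : n * (y * z) * n⁻¹ = (n * y * n⁻¹) * (n * z * n⁻¹) := by group
          rw [h2]
          exact mul_mem (le_sup_left (a := J a) (hJconjN a haV n hn y hy))
            (le_sup_right (a := J a) (ihconj n hn z hz))
  obtain ⟨hPc, hPN, hPconjN⟩ := main T hTV
  have hPV : P ≤ V := hPN.trans hNV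
  have hPcl : IsClosed (P : Set G) := hPc.isClosed
  -- K ≤ P
  have hKP : K ≤ P := by
    obtain ⟨t, htT, htN⟩ := hTrep 1 (one_mem V)
    have htN' : t ∈ N := by
      have : t⁻¹ ∈ N := by simpa using htN
      simpa using inv_mem this
    have := hJN_of_mem t htN'
    rw [← this]
    exact hJleP t htT
  -- P is stable under conjugation by V
  have hPconjV : ∀ v ∈ V, ∀ x ∈ P, v * x * v⁻¹ ∈ P := by
    intro v hv x hx
    rw [hP] at hx
    rw [show (⨆ t ∈ T, J t) = ⨆ t, ⨆ _ : t ∈ T, J t from rfl] at hx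
    induction hx using Subgroup.iSup_induction' with
    | hp t x hx =>
        by_cases ht : t ∈ T
        · rw [iSup_pos ht] at hx
          -- x ∈ J t, show v * x * v⁻¹ ∈ P
          obtain ⟨t', ht'T, ht'N⟩ := hTrep (v * t) (mul_mem hv (hTV t ht))
          refine hJleP t' ht'T ?_
          rw [hJmem] at hx ⊢
          have heq : t'⁻¹ * (v * x * v⁻¹) * t' =
              (t'⁻¹ * (v * t)) * (t⁻¹ * x * t) * (t'⁻¹ * (v * t))⁻¹ := by group
          rw [heq]
          exact hKconjN _ ht'N _ hx
        · rw [iSup_neg ht] at hx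
          rw [Subgroup.mem_bot] at hx
          subst hx
          simpa using Subgroup.one_mem P
    | h1 => simpa using Subgroup.one_mem P
    | hmul x y _ _ hx hy =>
        have h2 : v * (x * y) * v⁻¹ = (v * x * v⁻¹) * (v * y * v⁻¹) := by group
        rw [h2]
        exact mul_mem hx hy
  have hPnormal : (P.subgroupOf V).Normal := by
    rw [Subgroup.normal_subgroupOf_iff hPV]
    intro h k hh hk
    exact hPconjV k hk h hh
  -- pro-nilpotency of P
  have hPnil : IsProNilpotent ↥P := by
    intro N₀ hN₀ hN₀open
    haveI := hN₀
    haveI : CompactSpace ↥P := isCompact_iff_compactSpace.mp hPc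
    haveI : Finite (↥P ⧸ N₀) := Subgroup.quotient_finite_of_isOpen N₀ hN₀open
    set π := QuotientGroup.mk' N₀ with hπ
    set R : G → Subgroup (↥P ⧸ N₀) := fun t => Subgroup.map π ((J t).subgroupOf P) with hR
    have hRnormal : ∀ t ∈ T, (R t).Normal := by
      intro t ht
      have : ((J t).subgroupOf P).Normal := by
        rw [Subgroup.normal_subgroupOf_iff (hJleP t ht)]
        intro h k hh hk
        exact hJconjN t (hTV t ht) k (hPN hk) h hh
      exact this.map π (QuotientGroup.mk'_surjective N₀)
    have hRnil : ∀ t ∈ T, Group.IsNilpotent ↥(R t) := by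
      intro t ht
      set φt : ↥(J t) →* (↥P ⧸ N₀) := π.comp (Subgroup.inclusion (hJleP t ht)) with hφt
      have hkn : φt.ker.Normal := inferInstance
      have hker_open : IsOpen ((φt.ker : Subgroup ↥(J t)) : Set ↥(J t)) := by
        have : φt.ker = N₀.comap (Subgroup.inclusion (hJleP t ht)) := by
          ext x
          simp only [hφt, MonoidHom.mem_ker, MonoidHom.comp_apply, Subgroup.mem_comap, hπ]
          rw [QuotientGroup.mk'_apply, QuotientGroup.eq_one_iff]
        rw [this, Subgroup.coe_comap]
        refine hN₀open.preimage ?_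
        exact Continuous.subtype_mk continuous_subtype_val _
      have hnil1 : Group.IsNilpotent (↥(J t) ⧸ φt.ker) := hJnil t φt.ker hkn hker_open
      haveI := hnil1
      have hrange : φt.range = R t := by
        ext x
        constructor
        · rintro ⟨⟨y, hy⟩, rfl⟩
          exact ⟨⟨y, hJleP t ht hy⟩, Subgroup.mem_subgroupOf.mpr hy, rfl⟩
        · rintro ⟨⟨y, hyP⟩, hy, rfl⟩
          exact ⟨⟨y, Subgroup.mem_subgroupOf.mp hy⟩, rfl⟩
      rw [← hrange]
      exact nilpotent_of_mulEquiv (QuotientGroup.quotientKerEquivRange φt)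
    have hRsup : (⨆ t ∈ T, R t) = ⊤ := by
      rw [eq_top_iff]
      intro q _
      obtain ⟨x, rfl⟩ := QuotientGroup.mk'_surjective N₀ q
      have key : ∀ (g : G) (hg : g ∈ ⨆ t, ⨆ _ : t ∈ T, J t), ∀ (hgP : g ∈ P),
          π ⟨g, hgP⟩ ∈ ⨆ t ∈ T, R t := by
        intro g hg
        induction hg using Subgroup.iSup_induction' with
        | hp t g hgt =>
            intro hgP
            by_cases ht : t ∈ T
            · rw [iSup_pos ht] at hgt
              have hmem : π ⟨g, hgP⟩ ∈ R t := ⟨⟨g, hgP⟩, Subgroup.mem_subgroupOf.mpr hgt, rfl⟩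
              have hle : R t ≤ ⨆ t ∈ T, R t := le_iSup₂ (f := fun t (_ : t ∈ T) => R t) t ht
              exact hle hmem
            · rw [iSup_neg ht, Subgroup.mem_bot] at hgt
              subst hgt
              have h1 : (⟨(1 : G), hgP⟩ : ↥P) = 1 := rfl
              rw [h1, map_one]
              exact Subgroup.one_mem _
        | h1 =>
            intro hgP
            have h1 : (⟨(1 : G), hgP⟩ : ↥P) = 1 := rfl
            rw [h1, map_one]
            exact Subgroup.one_mem _
        | hmul x y hxm hym hx hy =>
            intro hxyP
            have hxP : x ∈ P := hxm
            have hyP : y ∈ P := hym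
            have h2 : (⟨x * y, hxyP⟩ : ↥P) = ⟨x, hxP⟩ * ⟨y, hyP⟩ := rfl
            rw [h2, map_mul]
            exact mul_mem (hx hxP) (hy hyP)
      exact key (x : G) x.2 x.2
    exact fitting_finset_top T R hRnormal hRnil hRsup
  -- conclude via maximality
  have hPFV : P ≤ FV := hFVmax P hPV hPcl hPnormal hPnil
  have hKFV : K ≤ FV := hKP.trans hPFV
  -- finite index of K in FU
  haveI : CompactSpace ↥FU := isCompact_iff_compactSpace.mp hFUc
  have hKopenFU : IsOpen ((K.subgroupOf FU : Subgroup ↥FU) : Set ↥FU) := by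
    have hseteq : ((K.subgroupOf FU : Subgroup ↥FU) : Set ↥FU) =
        Subtype.val ⁻¹' (N : Set G) := by
      ext x
      simp only [Set.mem_preimage, SetLike.mem_coe]
      rw [Subgroup.mem_subgroupOf, hK, Subgroup.mem_inf]
      exact ⟨fun h => h.2, fun h => ⟨x.2, h⟩⟩
    rw [hseteq]
    exact hNo.preimage continuous_subtype_val
  haveI : Finite (↥FU ⧸ K.subgroupOf FU) := Subgroup.quotient_finite_of_isOpen _ hKopenFU
  have hKrel : K.relIndex FU ≠ 0 := Subgroup.index_ne_zero_of_finite
  have hdvd : FV.relIndex FU ∣ K.relIndex FU := Subgroup.relIndex_dvd_of_le_left FU hKFV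
  intro h0
  rw [h0] at hdvd
  exact hKrel (Nat.eq_zero_of_zero_dvd hdvd)

/-- The Fitting subgroups of any two compact open subgroups of a t.d.l.c.s.c. group are
commensurate; in particular the Fitting subgroup of a compact open subgroup is
commensurated by `G`. -/
theorem fitting_subgroups_commensurate
    (G : Type*) [Group G] [TopologicalSpace G] [IsTopologicalGroup G]
    [LocallyCompactSpace G] [TotallyDisconnectedSpace G]
    [SecondCountableTopology G]
    (U V : Subgroup G)
    (hUc : IsCompact (U : Set G)) (hUo : IsOpen (U : Set G))
    (hVc : IsCompact (V : Set G)) (hVo : IsOpen (V : Set G))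
    (FU FV : Subgroup G)
    (hFUle : FU ≤ U) (hFUclosed : IsClosed (FU : Set G))
    (hFUnormal : (FU.subgroupOf U).Normal) (hFUnil : IsProNilpotent ↥FU)
    (hFUmax : ∀ K : Subgroup G, K ≤ U → IsClosed (K : Set G) → (K.subgroupOf U).Normal →
      IsProNilpotent ↥K → K ≤ FU)
    (hFVle : FV ≤ V) (hFVclosed : IsClosed (FV : Set G))
    (hFVnormal : (FV.subgroupOf V).Normal) (hFVnil : IsProNilpotent ↥FV)
    (hFVmax : ∀ K : Subgroup G, K ≤ V → IsClosed (K : Set G) → (K.subgroupOf V).Normal →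
      IsProNilpotent ↥K → K ≤ FV) :
    Commensurable FU FV ∧
      ∀ g : G, Commensurable (FU.map (MulAut.conj g).toMonoidHom) FU := by
  constructor
  · exact ⟨fitting_relindex_ne_zero V U hVc hVo hUc hUo FV FU hFVle hFVclosed hFVnormal
      hFVnil hFUmax,
      fitting_relindex_ne_zero U V hUc hUo hVc hVo FU FV hFUle hFUclosed hFUnormal
      hFUnil hFVmax⟩
  · intro g
    set φ := (MulAut.conj g).toMonoidHom with hφ
    set V' := U.map φ with hV'
    set FV' := FU.map φ with hFV'
    have hV'c : IsCompact (V' : Set G) := isCompact_conj_map hUc g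
    have hV'o : IsOpen (V' : Set G) := by
      rw [hV', hφ, coe_conj_map]
      have h : (fun x => g * x * g⁻¹) '' (U : Set G) = (homeomorph_conj g) '' U := rfl
      rw [h]
      exact (homeomorph_conj g).isOpen_image.mpr hUo
    have hFV'le : FV' ≤ V' := Subgroup.map_mono hFUle
    have hFV'closed : IsClosed (FV' : Set G) := by
      rw [hFV', hφ, coe_conj_map]
      have h : (fun x => g * x * g⁻¹) '' (FU : Set G) = (homeomorph_conj g) '' FU := rfl
      rw [h]
      exact (homeomorph_conj g).isClosed_image.mpr hFUclosed
    have hFUconj : ∀ h k : G, h ∈ FU → k ∈ U → k * h * k⁻¹ ∈ FU :=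
      (Subgroup.normal_subgroupOf_iff hFUle).mp hFUnormal
    have hFV'normal : (FV'.subgroupOf V').Normal := by
      rw [Subgroup.normal_subgroupOf_iff hFV'le]
      intro h k hh hk
      rw [hFV', hφ, conj_mem_map] at hh ⊢
      rw [hV', hφ, conj_mem_map] at hk
      have heq : g⁻¹ * (k * h * k⁻¹) * g =
          (g⁻¹ * k * g) * (g⁻¹ * h * g) * (g⁻¹ * k * g)⁻¹ := by group
      rw [heq]
      exact hFUconj _ _ hh hk
    have hFV'nil : IsProNilpotent ↥FV' := isProNilpotent_conj_map hFUnil g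
    have hFV'max : ∀ K : Subgroup G, K ≤ V' → IsClosed (K : Set G) →
        (K.subgroupOf V').Normal → IsProNilpotent ↥K → K ≤ FV' := by
      intro K hKV hKcl hKnorm hKnil
      set K0 := K.map (MulAut.conj g⁻¹).toMonoidHom with hK0
      have hback : K0.map φ = K := by
        rw [hK0, hφ, conj_map_map, mul_inv_cancel, conj_map_one]
      have hKU : K0 ≤ U := by
        intro x hx
        rw [hK0, conj_mem_map] at hx
        have hx' : g * x * g⁻¹ ∈ K := by
          have heq : (g⁻¹)⁻¹ * x * g⁻¹ = g * x * g⁻¹ := by group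
          rwa [heq] at hx
        have := hKV hx'
        rw [hV', hφ, conj_mem_map] at this
        have heq : g⁻¹ * (g * x * g⁻¹) * g = x := by group
        rwa [heq] at this
      have hK0cl : IsClosed (K0 : Set G) := by
        rw [hK0, coe_conj_map]
        have h : (fun x => g⁻¹ * x * g⁻¹⁻¹) '' (K : Set G) = (homeomorph_conj g⁻¹) '' K := rfl
        rw [h]
        exact (homeomorph_conj g⁻¹).isClosed_image.mpr hKcl
      have hKnorm' : ∀ h k : G, h ∈ K → k ∈ V' → k * h * k⁻¹ ∈ K :=
        (Subgroup.normal_subgroupOf_iff hKV).mp hKnorm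
      have hK0norm : (K0.subgroupOf U).Normal := by
        rw [Subgroup.normal_subgroupOf_iff hKU]
        intro h k hh hk
        rw [hK0, conj_mem_map] at hh ⊢
        have hh' : g * h * g⁻¹ ∈ K := by
          have heq : (g⁻¹)⁻¹ * h * g⁻¹ = g * h * g⁻¹ := by group
          rwa [heq] at hh
        have hkV' : g * k * g⁻¹ ∈ V' := by
          rw [hV', hφ, conj_mem_map]
          have heq : g⁻¹ * (g * k * g⁻¹) * g = k := by group
          rwa [heq]
        have hres := hKnorm' _ _ hh' hkV'
        have heq : (g * k * g⁻¹) * (g * h * g⁻¹) * (g * k * g⁻¹)⁻¹ =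
            g * (k * h * k⁻¹) * g⁻¹ := by group
        rw [heq] at hres
        have heq2 : (g⁻¹)⁻¹ * (k * h * k⁻¹) * g⁻¹ = g * (k * h * k⁻¹) * g⁻¹ := by group
        rwa [heq2]
      have hK0nil : IsProNilpotent ↥K0 := isProNilpotent_conj_map hKnil g⁻¹
      have hfin := hFUmax K0 hKU hK0cl hK0norm hK0nil
      calc K = K0.map φ := hback.symm
        _ ≤ FU.map φ := Subgroup.map_mono hfin
    exact ⟨fitting_relindex_ne_zero U V' hUc hUo hV'c hV'o FU FV' hFUle hFUclosed hFUnormal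
        hFUnil hFV'max,
      fitting_relindex_ne_zero V' U hV'c hV'o hUc hUo FV' FU hFV'le hFV'closed hFV'normal
        hFV'nil hFUmax⟩
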